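/- Fix an integer d ≥ 3. For each n ≥ 2 let c_n be the least positive real number with Q_{n−1}(c_n) = c_n, and for k ≥ 1 and n ≥ 2 set z_{k,n} = f_{c_n}^{k−1}(0). Then for every k ≥ 3 and all integers i, j with k ≤ i < j one has 0 < c_k = z_{k,k}, z_{k,i} < z_{k,j}, and z_{k,j} < 1; that is, for fixed k ≥ 3 the sequence n ↦ z_{k,n} (n ≥ k) is strictly increasing and bounded above by 1. -/

import Mathlib

/-- For a fixed degree `d`, the functions `Q_k : ℝ → ℝ` defined recursively by
`Q_1(y) = 1` and
`Q_{k+1}(y) = ((d−1)y^d − (d−1)Q_k(y)^d)/((d−1)y^d − d·Q_k(y)^(d−1))` (for `k ≥ 1`);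
`Q d 0` is set to the constant `0`, and is never used below. -/
noncomputable def Q (d : ℕ) : ℕ → ℝ → ℝ
  | 0, _ => 0
  | 1, _ => 1
  | (k + 2), y =>
      (((d : ℝ) - 1) * y ^ d - ((d : ℝ) - 1) * (Q d (k + 1) y) ^ d) /
        (((d : ℝ) - 1) * y ^ d - (d : ℝ) * (Q d (k + 1) y) ^ (d - 1))

/-- The rational map `f_c(x) = ((d−1)c^d − (d−1)x^d)/((d−1)c^d − d·x^(d−1))`,
whose iterates give `Q_k(c) = f_c^k(0)`. -/
noncomputable def f (d : ℕ) (c x : ℝ) : ℝ :=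
  (((d : ℝ) - 1) * c ^ d - ((d : ℝ) - 1) * x ^ d) /
    (((d : ℝ) - 1) * c ^ d - (d : ℝ) * x ^ (d - 1))

noncomputable def X (d : ℕ) (y : ℝ) (m : ℕ) : ℝ := (f d y)^[m] 0

lemma X_zero (d : ℕ) (y : ℝ) : X d y 0 = 0 := rfl

lemma X_succ (d : ℕ) (y : ℝ) (m : ℕ) : X d y (m + 1) = f d y (X d y m) :=
  Function.iterate_succ_apply' _ _ _

lemma f_zero {d : ℕ} (hd : 3 ≤ d) {y : ℝ} (hy : y ≠ 0) : f d y 0 = 1 := by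
  have h1 : ((d : ℝ) - 1) * y ^ d ≠ 0 := by
    have : (3:ℝ) ≤ (d:ℝ) := by exact_mod_cast hd
    have hyd : y ^ d ≠ 0 := pow_ne_zero _ hy
    intro h
    rcases mul_eq_zero.1 h with h | h
    · linarith
    · exact hyd h
  rw [f, zero_pow (by omega : d ≠ 0), zero_pow (by omega : d - 1 ≠ 0)]
  simp only [mul_zero, sub_zero]
  exact div_self h1

lemma f_self (d : ℕ) (y : ℝ) : f d y y = 0 := by
  rw [f, sub_self, zero_div]

lemma X_one {d : ℕ} (hd : 3 ≤ d) {y : ℝ} (hy : y ≠ 0) : X d y 1 = 1 := by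
  rw [X]; simp [f_zero hd hy]

lemma Q_eq {d : ℕ} (hd : 3 ≤ d) {y : ℝ} (hy : y ≠ 0) : ∀ m, Q d m y = X d y m := by
  intro m
  induction m using Nat.twoStepInduction with
  | zero => rw [Q, X_zero]
  | one => rw [Q, X_one hd hy]
  | more k ih ih1 =>
      rw [X_succ, Q, ih1, f]

lemma den_neg {d : ℕ} (hd : 3 ≤ d) {y x : ℝ} (h0 : 0 < y) (h1 : y ≤ 1) (hx : y ≤ x) :
    ((d : ℝ) - 1) * y ^ d - (d : ℝ) * x ^ (d - 1) < 0 := by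
  have hd3 : (3:ℝ) ≤ (d:ℝ) := by exact_mod_cast hd
  have h1' : y ^ d ≤ y ^ (d - 1) := pow_le_pow_of_le_one h0.le h1 (by omega)
  have h2 : y ^ (d - 1) ≤ x ^ (d - 1) := pow_le_pow_left₀ h0.le hx _
  have h3 : 0 < x ^ (d - 1) := pow_pos (h0.trans_le hx) _
  have h4 : 0 < y ^ (d-1) := pow_pos h0 _
  nlinarith

lemma f_lt {d : ℕ} (hd : 3 ≤ d) {y x : ℝ} (h0 : 0 < y) (h1 : y ≤ 1) (hx : y ≤ x)
    (hx1 : x ≤ 1) : f d y x < x := by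
  have hden := den_neg hd h0 h1 hx
  rw [f, div_lt_iff_of_neg hden]
  have hd3 : (3:ℝ) ≤ (d:ℝ) := by exact_mod_cast hd
  have hxd : x ^ d = x ^ (d - 1) * x := by
    rw [← pow_succ]; congr 1; omega
  have hyd : 0 ≤ y ^ d := (pow_pos h0 _).le
  have hxd0 : 0 < x ^ d := pow_pos (h0.trans_le hx) _
  nlinarith [mul_nonneg (mul_nonneg (by linarith : (0:ℝ) ≤ (d:ℝ)-1) hyd) (by linarith : (0:ℝ) ≤ 1 - x)]

lemma Hmono {d : ℕ} (hd : 3 ≤ d) {x t : ℝ} (hx : 0 ≤ x) (hxt : x ≤ t) (ht : t ≤ 1) :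
    (d : ℝ) * x ^ (d - 1) - ((d : ℝ) - 1) * x ^ d ≤ (d : ℝ) * t ^ (d - 1) - ((d : ℝ) - 1) * t ^ d := by
  set H : ℝ → ℝ := fun s => (d : ℝ) * s ^ (d - 1) - ((d : ℝ) - 1) * s ^ d with hH
  have hmono : MonotoneOn H (Set.Icc (0:ℝ) 1) := by
    apply monotoneOn_of_deriv_nonneg (convex_Icc 0 1)
    · fun_prop
    · fun_prop
    · intro s hs
      rw [interior_Icc] at hs
      have hder : deriv H s = (d : ℝ) * ((d - 1 : ℕ) * s ^ (d - 1 - 1)) - ((d:ℝ) - 1) * ((d : ℕ) * s ^ (d - 1)) := by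
        rw [hH]
        rw [deriv_fun_sub (by fun_prop) (by fun_prop), deriv_const_mul _ (by fun_prop),
          deriv_const_mul _ (by fun_prop), deriv_pow_field, deriv_pow_field]
      rw [hder]
      have hcast : ((d - 1 : ℕ) : ℝ) = (d : ℝ) - 1 := by
        have : (1:ℕ) ≤ d := by omega
        push_cast [this]; ring
      rw [hcast]
      have h1 : s ^ (d - 1) ≤ s ^ (d - 1 - 1) := pow_le_pow_of_le_one hs.1.le hs.2.le (by omega)
      have hd3 : (3:ℝ) ≤ (d:ℝ) := by exact_mod_cast hd
      nlinarith [mul_le_mul_of_nonneg_left h1 (by nlinarith : (0:ℝ) ≤ (d:ℝ)*((d:ℝ)-1))]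
  exact hmono ⟨hx, hxt.trans ht⟩ ⟨hx.trans hxt, ht⟩ hxt

lemma f_mono_x {d : ℕ} (hd : 3 ≤ d) {y x1 x2 : ℝ} (h0 : 0 < y) (h1 : y ≤ 1)
    (ha : y ≤ x1) (h12 : x1 ≤ x2) (h2 : x2 ≤ 1) : f d y x1 ≤ f d y x2 := by
  have hden1 := den_neg hd h0 h1 ha
  have hden2 := den_neg hd h0 h1 (ha.trans h12)
  have hH := Hmono hd (le_trans h0.le ha : (0:ℝ) ≤ x1) h12 h2
  have hd3 : (3:ℝ) ≤ (d:ℝ) := by exact_mod_cast hd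
  have hx10 : 0 < x1 := h0.trans_le ha
  rw [f, f, ← sub_nonneg, div_sub_div _ _ hden2.ne hden1.ne]
  apply div_nonneg ?_ (mul_pos_of_neg_of_neg hden2 hden1).le
  have key : (((d:ℝ)-1)*y^d - ((d:ℝ)-1)*x2^d) * (((d:ℝ)-1)*y^d - (d:ℝ)*x1^(d-1))
      - (((d:ℝ)-1)*y^d - (d:ℝ)*x2^(d-1)) * (((d:ℝ)-1)*y^d - ((d:ℝ)-1)*x1^d)
      = (((d:ℝ)-1)*y^d) * (((d:ℝ)*x2^(d-1) - ((d:ℝ)-1)*x2^d) - ((d:ℝ)*x1^(d-1) - ((d:ℝ)-1)*x1^d))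
        + (d:ℝ)*((d:ℝ)-1)*x1^(d-1)*x2^(d-1)*(x2-x1) := by
    obtain ⟨e, rfl⟩ : ∃ e, d = e + 1 := ⟨d-1, by omega⟩
    simp only [Nat.add_sub_cancel]
    push_cast
    ring
  rw [key]
  have h5 : (0:ℝ) ≤ (((d:ℝ)-1)*y^d) :=
    mul_nonneg (by linarith) (pow_pos h0 d).le
  have h6 : (0:ℝ) ≤ (d:ℝ)*((d:ℝ)-1)*x1^(d-1)*x2^(d-1)*(x2-x1) := by
    have h7 : (0:ℝ) ≤ x2 - x1 := by linarith
    have h8 : (0:ℝ) < x1 ^ (d-1) := pow_pos hx10 _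
    have h9 : (0:ℝ) < x2 ^ (d-1) := pow_pos (hx10.trans_le h12) _
    have : (0:ℝ) ≤ (d:ℝ)*((d:ℝ)-1) := by nlinarith
    positivity
  nlinarith [mul_nonneg h5 (by linarith : (0:ℝ) ≤ ((d:ℝ)*x2^(d-1) - ((d:ℝ)-1)*x2^d) - ((d:ℝ)*x1^(d-1) - ((d:ℝ)-1)*x1^d))]

lemma f_mono_c {d : ℕ} (hd : 3 ≤ d) {y' y x : ℝ} (h0' : 0 < y') (h'y : y' ≤ y)
    (hx0 : 0 < x) (hx1 : x ≤ 1)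
    (hden : ((d:ℝ)-1)*y^d - (d:ℝ)*x^(d-1) < 0) :
    f d y x ≤ f d y' x ∧ (y' < y → f d y x < f d y' x) := by
  have hd3 : (3:ℝ) ≤ (d:ℝ) := by exact_mod_cast hd
  have hle : y'^d ≤ y^d := pow_le_pow_left₀ h0'.le h'y _
  have hden' : ((d:ℝ)-1)*y'^d - (d:ℝ)*x^(d-1) < 0 := by nlinarith
  have hmain : f d y' x - f d y x =
      ((((d:ℝ)-1)*(y^d - y'^d)) * (x^(d-1) * ((d:ℝ) - ((d:ℝ)-1)*x))) /
        (((((d:ℝ)-1)*y'^d - (d:ℝ)*x^(d-1))) * ((((d:ℝ)-1)*y^d - (d:ℝ)*x^(d-1)))) := by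
    rw [f, f, div_sub_div _ _ hden'.ne hden.ne]
    congr 1
    obtain ⟨e, rfl⟩ : ∃ e, d = e + 1 := ⟨d-1, by omega⟩
    simp only [Nat.add_sub_cancel]
    push_cast
    ring
  have hdd : 0 < (((d:ℝ)-1)*y'^d - (d:ℝ)*x^(d-1)) * (((d:ℝ)-1)*y^d - (d:ℝ)*x^(d-1)) :=
    mul_pos_of_neg_of_neg hden' hden
  have hfac : 0 < x^(d-1) * ((d:ℝ) - ((d:ℝ)-1)*x) := by
    have h1 : 0 < x ^ (d-1) := pow_pos hx0 _
    have h2 : ((d:ℝ)-1)*x ≤ (d:ℝ)-1 := by nlinarith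
    have : 0 < (d:ℝ) - ((d:ℝ)-1)*x := by linarith
    positivity
  constructor
  · rw [← sub_nonneg, hmain]
    apply div_nonneg ?_ hdd.le
    have h9 : (0:ℝ) ≤ ((d:ℝ)-1)*(y^d - y'^d) := by nlinarith
    exact mul_nonneg h9 hfac.le
  · intro hlt
    rw [← sub_pos, hmain]
    apply div_pos ?_ hdd
    have hstrict : y'^d < y^d := pow_lt_pow_left₀ hlt h0'.le (by omega)
    have h9 : (0:ℝ) < ((d:ℝ)-1)*(y^d - y'^d) := by nlinarith
    exact mul_pos h9 hfac

lemma f_lower {d : ℕ} (hd : 3 ≤ d) {a x : ℝ} (h0 : 0 < a) (hax : a ≤ x) (hx1 : x ≤ 1) :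
    ((d:ℝ)-1)/(d:ℝ) * (x - a) ≤ f d a x := by
  have ha1 : a ≤ 1 := hax.trans hx1
  have hden := den_neg hd h0 ha1 hax
  have hd3 : (3:ℝ) ≤ (d:ℝ) := by exact_mod_cast hd
  have hx0 : 0 < x := h0.trans_le hax
  have hxp : 0 < x^(d-1) := pow_pos hx0 _
  have hap : 0 < a^(d-1) := pow_pos h0 _
  have hnum : 0 ≤ ((d:ℝ)-1)*(x^d - a^d) := by
    have := pow_le_pow_left₀ h0.le hax d
    nlinarith
  have hdenpos : 0 < (d:ℝ)*x^(d-1) - ((d:ℝ)-1)*a^d := by linarith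
  have hrw : f d a x = (((d:ℝ)-1)*(x^d - a^d)) / ((d:ℝ)*x^(d-1) - ((d:ℝ)-1)*a^d) := by
    rw [f, div_eq_div_iff hden.ne hdenpos.ne']
    ring
  rw [hrw]
  have step1 : (((d:ℝ)-1)*(x^d - a^d)) / ((d:ℝ)*x^(d-1)) ≤
      (((d:ℝ)-1)*(x^d - a^d)) / ((d:ℝ)*x^(d-1) - ((d:ℝ)-1)*a^d) := by
    apply div_le_div_of_nonneg_left hnum hdenpos
    nlinarith [pow_pos h0 d]
  refine le_trans ?_ step1
  rw [div_mul_eq_mul_div, div_le_div_iff₀ (by linarith) (by positivity)]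
  have hxd : x^d = x^(d-1)*x := by rw [← pow_succ]; congr 1; omega
  have had : a^d = a^(d-1)*a := by rw [← pow_succ]; congr 1; omega
  rw [hxd, had]
  have h5 : a^(d-1) ≤ x^(d-1) := pow_le_pow_left₀ h0.le hax _
  have h6 : a*a^(d-1) ≤ a*x^(d-1) := by nlinarith
  nlinarith [mul_le_mul_of_nonneg_left h6 (by nlinarith : (0:ℝ) ≤ (d:ℝ)*((d:ℝ)-1))]

/-- Comparison lemma: smaller parameter gives (weakly, eventually strictly) larger orbit. -/
lemma comp {d : ℕ} (hd : 3 ≤ d) {y' y : ℝ} (h0' : 0 < y') (h'y : y' ≤ y) (hy1 : y ≤ 1)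
    {m : ℕ} (hreg : ∀ t, 1 ≤ t → t + 1 ≤ m → y ≤ X d y t ∧ X d y t ≤ 1) :
    ∀ t, 1 ≤ t → t ≤ m →
      X d y t ≤ X d y' t ∧ X d y' t ≤ 1 ∧ (y' < y → 2 ≤ t → X d y t < X d y' t) := by
  have h0 : 0 < y := h0'.trans_le h'y
  have h0'1 : y' ≤ 1 := h'y.trans hy1
  intro t ht1
  induction t, ht1 using Nat.le_induction with
  | base =>
      intro _
      rw [X_one hd h0.ne', X_one hd h0'.ne']
      exact ⟨le_rfl, le_rfl, fun _ h => by omega⟩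
  | succ t ht1 ih =>
      intro htm
      obtain ⟨hyt, hyt1⟩ := hreg t ht1 htm
      obtain ⟨ih1, ih2, _⟩ := ih (by omega)
      have hX0 : 0 < X d y t := h0.trans_le hyt
      have hden := den_neg hd h0 hy1 hyt
      have c2 := f_mono_c hd h0' h'y hX0 hyt1 hden
      have c1 : f d y' (X d y t) ≤ f d y' (X d y' t) :=
        f_mono_x hd h0' h0'1 (h'y.trans hyt) ih1 ih2
      have hup : X d y' (t+1) ≤ 1 := by
        rw [X_succ]
        have := f_lt hd h0' h0'1 (le_trans (h'y.trans hyt) ih1) ih2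
        linarith
      refine ⟨?_, hup, ?_⟩
      · rw [X_succ, X_succ]
        exact le_trans (c2.1) c1
      · intro hlt _
        rw [X_succ, X_succ]
        exact lt_of_lt_of_le (c2.2 hlt) c1

/-- Continuity of `y ↦ X d y N` on a good interval. -/
lemma contX {d : ℕ} (hd : 3 ≤ d) {a b : ℝ} (h0 : 0 < a) (hb1 : b ≤ 1) (N : ℕ)
    (hreg : ∀ y ∈ Set.Icc a b, ∀ t, 1 ≤ t → t < N → y ≤ X d y t) :
    ContinuousOn (fun y => X d y N) (Set.Icc a b) := by
  suffices h : ∀ M, M ≤ N → ContinuousOn (fun y => X d y M) (Set.Icc a b) from h N le_rfl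
  intro M
  induction M with
  | zero => intro _; simpa [X_zero] using continuousOn_const
  | succ M ih =>
      intro hMN
      have hcM := ih (by omega)
      have heq : (fun y => X d y (M+1)) = fun y =>
          (((d : ℝ) - 1) * y ^ d - ((d : ℝ) - 1) * (X d y M) ^ d) /
            (((d : ℝ) - 1) * y ^ d - (d : ℝ) * (X d y M) ^ (d - 1)) := by
        funext y; rw [X_succ, f]
      rw [heq]
      apply ContinuousOn.div
      · exact (continuousOn_const.mul (continuousOn_pow d)).sub
          (continuousOn_const.mul (hcM.pow d))
      · exact (continuousOn_const.mul (continuousOn_pow d)).sub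
          (continuousOn_const.mul (hcM.pow (d-1)))
      · intro y hy
        rcases Nat.eq_zero_or_pos M with hM0 | hM1
        · subst hM0
          rw [X_zero, zero_pow (by omega : d - 1 ≠ 0), mul_zero, sub_zero]
          have hy0 : 0 < y := h0.trans_le hy.1
          have hd3 : (3:ℝ) ≤ (d:ℝ) := by exact_mod_cast hd
          have hpd := pow_pos hy0 d
          have : 0 < ((d:ℝ)-1) * y ^ d := by nlinarith
          exact this.ne'
        · have hyX := hreg y hy M hM1 (by omega)
          have hy0 : 0 < y := h0.trans_le hy.1
          exact (den_neg hd hy0 (hy.2.trans hb1) hyX).ne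

lemma X_pred {d : ℕ} {y : ℝ} {n : ℕ} (hn : 1 ≤ n) : X d y n = f d y (X d y (n - 1)) := by
  obtain ⟨m, rfl⟩ : ∃ m, n = m + 1 := ⟨n - 1, by omega⟩
  rw [Nat.add_sub_cancel, X_succ]


/-- Fix `d ≥ 3`.  For each `n ≥ 2` let `c n` be the least positive real with
`Q_{n−1}(c n) = c n`, and for `k ≥ 1`, `n ≥ 2` set `z_{k,n} = f_{c n}^(k−1)(0)`.
Then for every `k ≥ 3` and all `i, j` with `k ≤ i < j`: `0 < c k = z_{k,k}`,
`z_{k,i} < z_{k,j}`, and `z_{k,j} < 1`; i.e. for fixed `k ≥ 3` the sequence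
`n ↦ z_{k,n}` (for `n ≥ k`) is strictly increasing and bounded above by `1`. -/
theorem cycle_elements_move_right
    (d : ℕ) (hd : 3 ≤ d) (c : ℕ → ℝ)
    (hc : ∀ n : ℕ, 2 ≤ n → IsLeast {y : ℝ | 0 < y ∧ Q d (n - 1) y = y} (c n)) :
    (let z : ℕ → ℕ → ℝ := fun k n => (f d (c n))^[k - 1] 0
     ∀ k : ℕ, 3 ≤ k → ∀ i j : ℕ, k ≤ i → i < j →
       0 < c k ∧ c k = z k k ∧ z k i < z k j ∧ z k j < 1) := by
  intro z k hk i j hki hij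
  have hpos : ∀ n, 2 ≤ n → 0 < c n := fun n hn => (hc n hn).1.1
  have hfix : ∀ n, 2 ≤ n → X d (c n) (n - 1) = c n := by
    intro n hn
    have h1 := (hc n hn).1.2
    rwa [Q_eq hd (hpos n hn).ne'] at h1
  have hc2 : c 2 = 1 := by
    have h1 := (hc 2 le_rfl).1.2
    have h2 : Q d 1 (c 2) = 1 := by rw [Q]
    rw [(show (2:ℕ) - 1 = 1 from rfl), h2] at h1
    exact h1.symm
  have main : ∀ n, 2 ≤ n → ∀ t, 2 ≤ t → t ≤ n →
      ((c t ≤ 1 ∧ ∀ m, 1 ≤ m → m + 1 ≤ t → c t ≤ X d (c t) m ∧ X d (c t) m ≤ 1) ∧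
        ∀ m, 2 ≤ m → m < t → c t < c m) := by
    intro n hn
    induction n, hn using Nat.le_induction with
    | base =>
        intro t ht2 htn
        have ht : t = 2 := by omega
        subst ht
        refine ⟨⟨hc2.le, ?_⟩, fun m hm hmt => absurd hmt (by omega)⟩
        intro m hm1 hm2
        have hm : m = 1 := by omega
        subst hm
        rw [X_one hd (hpos 2 le_rfl).ne']
        exact ⟨hc2.le, le_rfl⟩
    | succ n hn2 IH =>
        intro t ht2 htn
        rcases Nat.lt_or_ge t (n + 1) with hlt | hge
        · exact IH t ht2 (by omega)
        · have ht : t = n + 1 := by omega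
          subst ht
          have hPn := (IH n hn2 le_rfl).1
          have chainlt : ∀ m t', 2 ≤ m → m < t' → t' ≤ n → c t' < c m :=
            fun m t' hm hmt' ht'n => (IH t' (by omega) ht'n).2 m hm hmt'
          have chainle : ∀ m t', 2 ≤ m → m ≤ t' → t' ≤ n → c t' ≤ c m := by
            intro m t' hm hmt' ht'
            rcases eq_or_lt_of_le hmt' with h | h
            · subst h; exact le_rfl
            · exact (chainlt m t' hm h ht').le
          have hbpos : 0 < c n := hpos n hn2
          have hb1 : c n ≤ 1 := hPn.1
          have orb : ∀ y, 0 < y → y ≤ c n → ∀ m, 1 ≤ m → m + 1 ≤ n →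
              c n ≤ X d y m ∧ X d y m ≤ 1 := by
            intro y hy0 hyc m hm1 hmn
            have hm2 : 2 ≤ m + 1 := by omega
            have hPm := (IH (m + 1) hm2 hmn).1
            have hcm : c n ≤ c (m + 1) := chainle (m + 1) n hm2 hmn le_rfl
            have hfm : X d (c (m + 1)) m = c (m + 1) := by
              have h := hfix (m + 1) hm2
              simpa using h
            have hcomp := comp hd hy0 (hyc.trans hcm) hPm.1
              (fun t' ht1 htm => hPm.2 t' ht1 (by omega)) m hm1 le_rfl
            rw [hfm] at hcomp
            exact ⟨hcm.trans hcomp.1, hcomp.2.1⟩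
          have ha0 : 0 < c n / 4 := by linarith
          have hab : c n / 4 ≤ c n := by linarith
          have hcont : ContinuousOn (fun y => X d y n) (Set.Icc (c n / 4) (c n)) := by
            apply contX hd ha0 hb1 n
            intro y hy t' ht1 htn2
            exact hy.2.trans (orb y (lt_of_lt_of_le ha0 hy.1) hy.2 t' ht1 (by omega)).1
          have hGcont : ContinuousOn (fun y => X d y n - y) (Set.Icc (c n / 4) (c n)) :=
            hcont.sub continuousOn_id
          have hXb : X d (c n) n = 0 := by
            rw [X_pred (by omega : 1 ≤ n), hfix n hn2, f_self]
          have hXa : c n / 2 ≤ X d (c n / 4) n := by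
            have hx := orb (c n / 4) ha0 hab (n - 1) (by omega) (by omega)
            rw [X_pred (by omega : 1 ≤ n)]
            have hlow := f_lower hd ha0 (hab.trans hx.1) hx.2
            have hd3 : (3:ℝ) ≤ (d:ℝ) := by exact_mod_cast hd
            have hd0 : (0:ℝ) < (d:ℝ) := by linarith
            have h23 : (2:ℝ)/3 ≤ ((d:ℝ)-1)/(d:ℝ) := by
              rw [div_le_div_iff₀ (by norm_num) hd0]
              linarith
            have h1 : (2:ℝ)/3 * (X d (c n / 4) (n - 1) - c n / 4) ≤
                ((d:ℝ)-1)/(d:ℝ) * (X d (c n / 4) (n - 1) - c n / 4) :=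
              mul_le_mul_of_nonneg_right h23 (by linarith [hx.1])
            linarith [hx.1]
          have hsub := intermediate_value_Icc' hab hGcont
          have h0mem : (0:ℝ) ∈ Set.Icc (X d (c n) n - c n) (X d (c n / 4) n - c n / 4) :=
            ⟨by rw [hXb]; linarith, by linarith⟩
          obtain ⟨ystar, hymem, hyeq⟩ := hsub h0mem
          have hy0 : 0 < ystar := lt_of_lt_of_le ha0 hymem.1
          have hyfix : X d ystar n = ystar := by
            simp only [sub_eq_zero] at hyeq
            exact hyeq
          have hylt : ystar < c n := by
            rcases lt_or_eq_of_le hymem.2 with h | h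
            · exact h
            · exfalso
              rw [h] at hyfix
              rw [hXb] at hyfix
              linarith
          have hS : ystar ∈ {y : ℝ | 0 < y ∧ Q d ((n + 1) - 1) y = y} := by
            refine ⟨hy0, ?_⟩
            rw [(show (n + 1) - 1 = n by omega), Q_eq hd hy0.ne', hyfix]
          have hstep : c (n + 1) < c n := lt_of_le_of_lt ((hc (n + 1) (by omega)).2 hS) hylt
          have hfixn1 : X d (c (n + 1)) n = c (n + 1) := by
            have h := hfix (n + 1) (by omega)
            simpa using h
          refine ⟨⟨hstep.le.trans hb1, ?_⟩, ?_⟩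
          · intro m hm1 hmn1
            rcases Nat.lt_or_ge (m + 1) (n + 1) with h | h
            · have horb := orb (c (n + 1)) (hpos (n + 1) (by omega)) hstep.le m hm1 (by omega)
              exact ⟨hstep.le.trans horb.1, horb.2⟩
            · have hmn : m = n := by omega
              subst hmn
              rw [hfixn1]
              exact ⟨le_rfl, hstep.le.trans hb1⟩
          · intro m hm2 hmn1
            rcases Nat.lt_or_ge m n with h | h
            · exact hstep.trans (chainlt m n hm2 h le_rfl)
            · have hmn : m = n := by omega
              subst hmn
              exact hstep
  have hj2 : 2 ≤ j := by omega
  have hi2 : 2 ≤ i := by omega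
  have hk2 : 2 ≤ k := by omega
  have hPi := (main i hi2 i hi2 le_rfl).1
  have hPj := (main j hj2 j hj2 le_rfl).1
  have hcji : c j < c i := (main j hj2 j hj2 le_rfl).2 i hi2 hij
  refine ⟨hpos k hk2, (hfix k hk2).symm, ?_, ?_⟩
  · have hcomp := comp hd (hpos j hj2) hcji.le hPi.1
      (fun t' ht1 htm => hPi.2 t' ht1 (by omega)) (k - 1) (by omega) le_rfl
    exact hcomp.2.2 hcji (by omega)
  · show X d (c j) (k - 1) < 1
    have hreg := hPj.2 (k - 2) (by omega) (by omega)
    rw [X_pred (by omega : 1 ≤ k - 1), (show k - 1 - 1 = k - 2 by omega)]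
    have hflt := f_lt hd (hpos j hj2) hPj.1 hreg.1 hreg.2
    linarith [hreg.2]
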